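/- arXiv:1312.2164 — 4 statements merged into one kernel-verified Lean document; each statement's English description precedes it below -/
import Mathlib

section
/- Let f be a normalized monotone submodular function on finite ground set Z, let F be the common independent sets of P matroids on Z, let G = {g₁, ..., g_m} ∈ F (listed in order with prefixes G^t = {g₁, ..., g_t}), and let O ∈ F. For 1 ≤ t ≤ m define C_t = {z ∈ O \ G : {z} ∪ G^{t−1} ∈ F and {z} ∪ G^t ∉ F}. Then ∑_{i=1}^{t} |C_i| ≤ P·t for every t = 1, ..., m. -/
open Finset
open scoped Classical

/-- A matroid on a finite ground set `Z`, given by a predicate `I` describing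
the independent sets. -/
structure IsMatroid {α : Type*} [DecidableEq α] (Z : Finset α) (I : Finset α → Prop) : Prop where
  empty_mem : I ∅
  subset_ground : ∀ ⦃S⦄, I S → S ⊆ Z
  heredity : ∀ ⦃X Y : Finset α⦄, I Y → X ⊆ Y → I X
  exchange : ∀ ⦃X Y : Finset α⦄, I X → I Y → X.card < Y.card →
    ∃ z ∈ Y \ X, I (insert z X)

/-- The prefix `G^t = {g₁, …, g_t}` of the greedy solution listed in order. -/
noncomputable def greedyPrefix {α : Type*} [DecidableEq α] {m : ℕ}
    (g : Fin m → α) (t : ℕ) : Finset α :=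
  (Finset.univ.filter (fun i : Fin m => (i : ℕ) < t)).image g

/-- `C_t`: the elements of `O \ G` that are still feasible before selecting the `t`-th
element `g_t` (i.e. can be added to `G^{t-1}` within `F`), but infeasible after
selecting `g_t` (cannot be added to `G^t` within `F`).  Here `t` is 1-indexed. -/
noncomputable def blockedAt {α : Type*} [DecidableEq α] {m : ℕ}
    (F : Finset α → Prop) (g : Fin m → α) (O G : Finset α) (t : ℕ) : Finset α :=
  (O \ G).filter (fun z =>
    F (insert z (greedyPrefix g (t - 1))) ∧ ¬ F (insert z (greedyPrefix g t)))

theorem stmt_8 {α : Type*} [DecidableEq α] (Z : Finset α) (P m : ℕ)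
    (I : Fin P → (Finset α → Prop)) (hM : ∀ p, IsMatroid Z (I p))
    (F : Finset α → Prop) (hF : ∀ S, F S ↔ ∀ p, I p S)
    (f : Finset α → ℝ)
    (g : Fin m → α) (hginj : Function.Injective g)
    (hGF : F (greedyPrefix g m))
    (O : Finset α) (hO : F O) :
    ∀ t : ℕ, 1 ≤ t → t ≤ m →
      ∑ i ∈ Finset.Icc 1 t, (blockedAt F g O (greedyPrefix g m) i).card ≤ P * t := by
  intro t ht1 htm
  -- heredity for F
  have hFher : ∀ ⦃X Y : Finset α⦄, F Y → X ⊆ Y → F X := by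
    intro X Y hY hXY
    rw [hF] at *
    exact fun p => (hM p).heredity (hY p) hXY
  -- monotonicity of prefixes
  have hmono : ∀ {a b : ℕ}, a ≤ b → greedyPrefix g a ⊆ greedyPrefix g b := by
    intro a b hab
    exact Finset.image_subset_image (Finset.monotone_filter_right _
      (fun i _ hi => lt_of_lt_of_le hi hab))
  -- card of prefixes
  have hcard : ∀ s : ℕ, s ≤ m → (greedyPrefix g s).card = s := by
    intro s hsm
    rw [greedyPrefix, Finset.card_image_of_injective _ hginj]
    have : (Finset.univ.filter fun i : Fin m => (i : ℕ) < s)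
        = Finset.map (Fin.castLEEmb hsm) Finset.univ := by
      ext i
      simp only [Finset.mem_filter, Finset.mem_univ, true_and, Finset.mem_map,
        Fin.castLEEmb_apply]
      constructor
      · intro h; exact ⟨⟨(i : ℕ), h⟩, by simp [Fin.ext_iff]⟩
      · rintro ⟨j, rfl⟩; exact lt_of_lt_of_le j.2 le_rfl
    rw [this, Finset.card_map, Finset.card_univ, Fintype.card_fin]
  set C : ℕ → Finset α := fun i => blockedAt F g O (greedyPrefix g m) i with hC
  -- the C i are pairwise disjoint
  have hdisj : ∀ i ∈ Finset.Icc 1 t, ∀ j ∈ Finset.Icc 1 t, i ≠ j →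
      Disjoint (C i) (C j) := by
    have key : ∀ i j : ℕ, i < j → Disjoint (C i) (C j) := by
      intro i j hij
      rw [Finset.disjoint_left]
      intro z hzi hzj
      simp only [hC, blockedAt, Finset.mem_filter] at hzi hzj
      have h1 : ¬ F (insert z (greedyPrefix g i)) := hzi.2.2
      have h2 : F (insert z (greedyPrefix g (j - 1))) := hzj.2.1
      exact h1 (hFher h2 (Finset.insert_subset_insert _ (hmono (by omega))))
    intro i _ j _ hij
    rcases lt_or_gt_of_ne hij with h | h
    · exact key i j h
    · exact (key j i h).symm
  -- the union
  set U : Finset α := (Finset.Icc 1 t).biUnion C with hU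
  have hsum : ∑ i ∈ Finset.Icc 1 t, (C i).card = U.card :=
    (Finset.card_biUnion hdisj).symm
  -- each element of U is rejected by some matroid at G^t
  have hUrej : ∀ z ∈ U, z ∈ O ∧ ¬ F (insert z (greedyPrefix g t)) := by
    intro z hz
    rw [hU, Finset.mem_biUnion] at hz
    obtain ⟨i, hi, hzi⟩ := hz
    simp only [Finset.mem_Icc] at hi
    simp only [hC, blockedAt, Finset.mem_filter, Finset.mem_sdiff] at hzi
    refine ⟨hzi.1.1, fun hFt => hzi.2.2 ?_⟩
    exact hFher hFt (Finset.insert_subset_insert _ (hmono hi.2))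
  set D : Fin P → Finset α := fun p =>
    U.filter (fun z => ¬ I p (insert z (greedyPrefix g t))) with hD
  have hUsub : U ⊆ Finset.univ.biUnion D := by
    intro z hz
    obtain ⟨_, hnF⟩ := hUrej z hz
    rw [hF] at hnF
    push_neg at hnF
    obtain ⟨p, hp⟩ := hnF
    exact Finset.mem_biUnion.2 ⟨p, Finset.mem_univ p, Finset.mem_filter.2 ⟨hz, hp⟩⟩
  have hDle : ∀ p, (D p).card ≤ t := by
    intro p
    by_contra h
    push_neg at h
    have hDO : D p ⊆ O := fun z hz => (hUrej z (Finset.mem_filter.1 hz).1).1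
    have hDI : I p (D p) := (hM p).heredity ((hF O).1 hO p) hDO
    have hGt : I p (greedyPrefix g t) :=
      (hM p).heredity ((hF _).1 hGF p) (hmono htm)
    have hlt : (greedyPrefix g t).card < (D p).card := by
      rw [hcard t htm]; exact h
    obtain ⟨z, hz, hzI⟩ := (hM p).exchange hGt hDI hlt
    exact (Finset.mem_filter.1 (Finset.mem_sdiff.1 hz).1).2 hzI
  calc ∑ i ∈ Finset.Icc 1 t, (C i).card = U.card := hsum
    _ ≤ (Finset.univ.biUnion D).card := Finset.card_le_card hUsub
    _ ≤ ∑ p : Fin P, (D p).card := Finset.card_biUnion_le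
    _ ≤ ∑ _p : Fin P, t := Finset.sum_le_sum (fun p _ => hDle p)
    _ = P * t := by simp [Finset.sum_const, mul_comm]
end

section
/- Let f : 2^Z → ℝ be normalized monotone submodular on a finite set Z with an intersection F of P matroids, and let G ∈ F be such that: (i) elements of the optimal set O ∈ F blocked at step t (the set C_t) each have marginal gain f(j | G^{t−1}) ≤ (1+δ)τ_t, where τ_t is a nonincreasing sequence with f(g_t | G^{t−1}) ≥ τ_t; and (ii) ∑_{i=1}^{t}|C_i| ≤ P·t for all t; and (iii) O \ G = ⋃_t C_t. Then ∑_{j ∈ O\G} f(j | G) ≤ (1+δ)·P·f(G), and consequently f(O) ≤ (1 + (1+δ)P)·f(G). -/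
open Finset

/-- `f` is submodular on ground set `Z` (diminishing marginal gains). -/
def IsSubmodularOn {α : Type*} [DecidableEq α] (Z : Finset α) (f : Finset α → ℝ) : Prop :=
  ∀ S T : Finset α, S ⊆ T → T ⊆ Z → ∀ z ∈ Z, z ∉ T →
    f (insert z T) - f T ≤ f (insert z S) - f S

/-- `f` is monotone on subsets of `Z`. -/
def IsMonotoneOn {α : Type*} [DecidableEq α] (Z : Finset α) (f : Finset α → ℝ) : Prop :=
  ∀ S T : Finset α, S ⊆ T → T ⊆ Z → f S ≤ f T

/-- Abel-summation bound: if prefix sums of `a` are bounded by `P·t` and `T` is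
nonincreasing with `T m = 0`, then `∑ a·T ≤ P·∑ T`. -/
lemma abel_bound (m P : ℕ) (a T : ℕ → ℝ)
    (hTm : T m = 0)
    (hTmono : ∀ t, t < m → T (t + 1) ≤ T t)
    (hA : ∀ t, t ≤ m → ∑ k ∈ Finset.range t, a k ≤ (P : ℝ) * t) :
    ∑ k ∈ Finset.range m, a k * T k ≤ (P : ℝ) * ∑ t ∈ Finset.range m, T t := by
  have key : ∀ k ∈ Finset.range m, a k * T k =
      ∑ t ∈ Finset.Ico k m, a k * (T t - T (t + 1)) := by
    intro k hk
    rw [← mul_sum]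
    congr 1
    have hkm : k ≤ m := le_of_lt (Finset.mem_range.mp hk)
    rw [Finset.sum_Ico_eq_sum_range]
    have h2 := Finset.sum_range_sub' (fun j => T (k + j)) (m - k)
    simp only [Nat.add_zero, Nat.add_sub_cancel' hkm, hTm, sub_zero] at h2
    exact h2.symm
  rw [Finset.sum_congr rfl key]
  have swap : ∑ k ∈ Finset.range m, ∑ t ∈ Finset.Ico k m, a k * (T t - T (t + 1)) =
      ∑ t ∈ Finset.range m, ∑ k ∈ Finset.range (t + 1), a k * (T t - T (t + 1)) := by
    rw [Finset.range_eq_Ico, Finset.sum_Ico_Ico_comm]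
    simp only [Finset.range_eq_Ico]
  rw [swap]
  have step1 : ∑ t ∈ Finset.range m, ∑ k ∈ Finset.range (t + 1), a k * (T t - T (t + 1)) ≤
      ∑ t ∈ Finset.range m, (P : ℝ) * (t + 1) * (T t - T (t + 1)) := by
    apply Finset.sum_le_sum
    intro t ht
    have htm : t < m := Finset.mem_range.mp ht
    rw [← Finset.sum_mul]
    apply mul_le_mul_of_nonneg_right
    · have := hA (t + 1) htm
      push_cast at this ⊢
      linarith
    · have := hTmono t htm
      linarith
  refine step1.trans (le_of_eq ?_)
  set φ : ℕ → ℝ := fun t => (t : ℝ) * T t with hφ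
  have tele : ∑ t ∈ Finset.range m, (φ t - φ (t + 1)) = 0 := by
    rw [Finset.sum_range_sub' φ m]
    simp [hφ, hTm]
  calc ∑ t ∈ Finset.range m, (P : ℝ) * (t + 1) * (T t - T (t + 1))
      = (P : ℝ) * ∑ t ∈ Finset.range m, (T t + (φ t - φ (t + 1))) := by
        rw [Finset.mul_sum]
        apply Finset.sum_congr rfl
        intro t _
        simp only [hφ]
        push_cast
        ring
    _ = (P : ℝ) * ∑ t ∈ Finset.range m, T t := by
        rw [Finset.sum_add_distrib, tele, add_zero]

lemma greedyPrefix_mono {α : Type*} [DecidableEq α] {m : ℕ} (g : Fin m → α) {s t : ℕ}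
    (h : s ≤ t) : greedyPrefix g s ⊆ greedyPrefix g t := by
  apply Finset.image_subset_image
  intro i hi
  simp only [Finset.mem_filter, Finset.mem_univ, true_and] at *
  omega

lemma greedyPrefix_zero {α : Type*} [DecidableEq α] {m : ℕ} (g : Fin m → α) :
    greedyPrefix g 0 = ∅ := by
  simp [greedyPrefix]

lemma greedyPrefix_succ {α : Type*} [DecidableEq α] {m : ℕ} (g : Fin m → α) (i : Fin m) :
    greedyPrefix g ((i : ℕ) + 1) = insert (g i) (greedyPrefix g (i : ℕ)) := by
  unfold greedyPrefix
  have : (Finset.univ.filter (fun j : Fin m => (j : ℕ) < (i : ℕ) + 1)) =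
      insert i (Finset.univ.filter (fun j : Fin m => (j : ℕ) < (i : ℕ))) := by
    ext j
    simp only [Finset.mem_filter, Finset.mem_insert, Finset.mem_univ, true_and]
    constructor
    · intro hj
      rcases Nat.lt_succ_iff_lt_or_eq.mp hj with h | h
      · exact Or.inr h
      · exact Or.inl (Fin.ext h)
    · rintro (rfl | h)
      · omega
      · omega
  rw [this, Finset.image_insert]

/-- Submodular telescoping: adding a set `D` disjoint from `G` increases `f` by at most
the sum of individual marginal gains w.r.t. `G`. -/
lemma submod_union_bound {α : Type*} [DecidableEq α] (Z : Finset α) (f : Finset α → ℝ)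
    (hsub : IsSubmodularOn Z f) (G : Finset α) (hG : G ⊆ Z) :
    ∀ D : Finset α, D ⊆ Z → Disjoint D G →
      f (G ∪ D) ≤ f G + ∑ j ∈ D, (f (insert j G) - f G) := by
  intro D
  induction D using Finset.induction_on with
  | empty => intro _ _; simp
  | @insert x D hxD ih =>
      intro hDZ hdisj
      have hxZ : x ∈ Z := hDZ (Finset.mem_insert_self x D)
      have hDZ' : D ⊆ Z := (Finset.subset_insert x D).trans hDZ
      have hdisj' : Disjoint D G := Finset.disjoint_of_subset_left (Finset.subset_insert x D) hdisj
      have hxG : x ∉ G := Finset.disjoint_left.mp hdisj (Finset.mem_insert_self x D)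
      have hxGD : x ∉ G ∪ D := by
        simp only [Finset.mem_union]
        rintro (h | h)
        · exact hxG h
        · exact hxD h
      have hstep : f (insert x (G ∪ D)) - f (G ∪ D) ≤ f (insert x G) - f G :=
        hsub G (G ∪ D) Finset.subset_union_left (Finset.union_subset hG hDZ') x hxZ hxGD
      have hIH := ih hDZ' hdisj'
      have heq : G ∪ insert x D = insert x (G ∪ D) := by
        ext y; simp [Finset.mem_union, Finset.mem_insert]
      rw [heq, Finset.sum_insert hxD]
      linarith

theorem stmt_9 {α : Type*} [DecidableEq α] (Z : Finset α) (P m : ℕ) (δ : ℝ)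
    (hδ : 0 ≤ δ)
    (f : Finset α → ℝ) (hnorm : f ∅ = 0)
    (hmono : IsMonotoneOn Z f) (hsub : IsSubmodularOn Z f)
    (g : Fin m → α) (hginj : Function.Injective g)
    (G : Finset α) (hGdef : G = greedyPrefix g m) (hG : G ⊆ Z)
    (O : Finset α) (hO : O ⊆ Z)
    (τ : Fin m → ℝ) (hτ0 : ∀ i, 0 ≤ τ i)
    (hτmono : ∀ i j : Fin m, i ≤ j → τ j ≤ τ i)
    -- `g_t` (the element `g i` with `t = i+1`) has marginal gain at least `τ_t`
    (hgain : ∀ i : Fin m,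
      f (insert (g i) (greedyPrefix g i)) - f (greedyPrefix g i) ≥ τ i)
    -- the blocked sets `C_t` (here `C i` is `C_{i+1}`)
    (C : Fin m → Finset α)
    (hCdisj : ∀ i j : Fin m, i ≠ j → Disjoint (C i) (C j))
    -- (iii) `O \ G = ⋃_t C_t`
    (hCunion : Finset.univ.biUnion C = O \ G)
    -- (i) each blocked element's marginal gain w.r.t. `G^{t-1}` is at most `(1+δ)τ_t`
    (hCgain : ∀ i : Fin m, ∀ j ∈ C i,
      f (insert j (greedyPrefix g i)) - f (greedyPrefix g i) ≤ (1 + δ) * τ i)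
    -- (ii) prefix-size bound `∑_{i=1}^t |C_i| ≤ P·t`
    (hCsize : ∀ t : ℕ, t ≤ m →
      ∑ i ∈ Finset.univ.filter (fun i : Fin m => (i : ℕ) < t), (C i).card ≤ P * t) :
    (∑ j ∈ O \ G, (f (insert j G) - f G) ≤ (1 + δ) * P * f G) ∧
    f O ≤ (1 + (1 + δ) * P) * f G := by
  -- τ sums to at most f G (telescoping over greedy steps)
  have hfG0 : 0 ≤ f G := by
    have := hmono ∅ G (Finset.empty_subset G) hG
    linarith [this, hnorm.symm ▸ this]
  have hτsum : ∑ i : Fin m, τ i ≤ f G := by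
    have step : ∑ i : Fin m, τ i ≤
        ∑ i : Fin m, (f (greedyPrefix g ((i : ℕ) + 1)) - f (greedyPrefix g (i : ℕ))) := by
      apply Finset.sum_le_sum
      intro i _
      rw [greedyPrefix_succ]
      exact hgain i
    have tele : ∑ i : Fin m, (f (greedyPrefix g ((i : ℕ) + 1)) - f (greedyPrefix g (i : ℕ)))
        = f (greedyPrefix g m) - f (greedyPrefix g 0) := by
      rw [Fin.sum_univ_eq_sum_range (fun k => f (greedyPrefix g (k + 1)) - f (greedyPrefix g k)) m]
      exact Finset.sum_range_sub (fun k => f (greedyPrefix g k)) m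
    rw [tele, greedyPrefix_zero, hnorm, sub_zero, ← hGdef] at step
    exact step
  -- each C i is contained in O \ G
  have hCsub : ∀ i : Fin m, C i ⊆ O \ G := by
    intro i
    rw [← hCunion]
    exact Finset.subset_biUnion_of_mem C (Finset.mem_univ i)
  -- marginal gains w.r.t. G bounded by (1+δ)τ i for j ∈ C i
  have hmarg : ∀ i : Fin m, ∀ j ∈ C i, f (insert j G) - f G ≤ (1 + δ) * τ i := by
    intro i j hj
    have hjOG : j ∈ O \ G := hCsub i hj
    have hjZ : j ∈ Z := hO (Finset.mem_sdiff.mp hjOG).1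
    have hjG : j ∉ G := (Finset.mem_sdiff.mp hjOG).2
    have hpre : greedyPrefix g (i : ℕ) ⊆ G := by
      rw [hGdef]; exact greedyPrefix_mono g (le_of_lt i.isLt)
    have := hsub (greedyPrefix g (i : ℕ)) G hpre hG j hjZ hjG
    exact this.trans (hCgain i j hj)
  -- the Abel bound
  have habel : ∑ i : Fin m, ((C i).card : ℝ) * τ i ≤ (P : ℝ) * ∑ i : Fin m, τ i := by
    set a : ℕ → ℝ := fun k => if h : k < m then ((C ⟨k, h⟩).card : ℝ) else 0 with ha
    set T : ℕ → ℝ := fun k => if h : k < m then τ ⟨k, h⟩ else 0 with hT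
    have haT : ∀ i : Fin m, ((C i).card : ℝ) * τ i = a (i : ℕ) * T (i : ℕ) := by
      intro i
      simp only [ha, hT, dif_pos i.isLt]
    have hτT : ∀ i : Fin m, τ i = T (i : ℕ) := by
      intro i; simp only [hT, dif_pos i.isLt]
    rw [Finset.sum_congr rfl (fun i _ => haT i), Finset.sum_congr rfl (fun i _ => hτT i)]
    rw [Fin.sum_univ_eq_sum_range (fun k => a k * T k) m, Fin.sum_univ_eq_sum_range T m]
    apply abel_bound
    · simp [hT]
    · intro t ht
      simp only [hT]
      by_cases h1 : t + 1 < m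
      · rw [dif_pos h1, dif_pos ht]
        exact hτmono ⟨t, ht⟩ ⟨t + 1, h1⟩ (by simp [Fin.le_def])
      · rw [dif_neg h1, dif_pos ht]
        exact hτ0 _
    · intro t ht
      have := hCsize t ht
      have hsum : ∑ k ∈ Finset.range t, a k =
          ((∑ i ∈ Finset.univ.filter (fun i : Fin m => (i : ℕ) < t), (C i).card : ℕ) : ℝ) := by
        push_cast
        calc ∑ k ∈ Finset.range t, a k
            = ∑ k ∈ (Finset.range m).filter (fun k => k < t), a k := by
              congr 1
              ext k
              simp only [Finset.mem_range, Finset.mem_filter]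
              omega
          _ = ∑ k ∈ Finset.range m, (if k < t then a k else 0) := Finset.sum_filter _ _
          _ = ∑ i : Fin m, (if (i : ℕ) < t then a (i : ℕ) else 0) :=
              (Fin.sum_univ_eq_sum_range (fun k => if k < t then a k else 0) m).symm
          _ = ∑ i : Fin m, (if (i : ℕ) < t then ((C i).card : ℝ) else 0) := by
              apply Finset.sum_congr rfl
              intro i _
              simp only [ha, dif_pos i.isLt, Fin.eta]
          _ = ∑ i ∈ Finset.univ.filter (fun i : Fin m => (i : ℕ) < t), ((C i).card : ℝ) :=
              (Finset.sum_filter _ _).symm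
      rw [hsum]
      calc ((∑ i ∈ Finset.univ.filter (fun i : Fin m => (i : ℕ) < t), (C i).card : ℕ) : ℝ)
          ≤ ((P * t : ℕ) : ℝ) := by exact_mod_cast this
        _ = (P : ℝ) * t := by push_cast; ring
  -- Part 1
  have part1 : ∑ j ∈ O \ G, (f (insert j G) - f G) ≤ (1 + δ) * P * f G := by
    have hsplit : ∑ j ∈ O \ G, (f (insert j G) - f G) =
        ∑ i : Fin m, ∑ j ∈ C i, (f (insert j G) - f G) := by
      rw [← hCunion, Finset.sum_biUnion]
      intro i _ j _ hij
      exact hCdisj i j hij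
    rw [hsplit]
    calc ∑ i : Fin m, ∑ j ∈ C i, (f (insert j G) - f G)
        ≤ ∑ i : Fin m, ∑ j ∈ C i, (1 + δ) * τ i := by
          apply Finset.sum_le_sum
          intro i _
          exact Finset.sum_le_sum (fun j hj => hmarg i j hj)
      _ = (1 + δ) * ∑ i : Fin m, ((C i).card : ℝ) * τ i := by
          rw [Finset.mul_sum]
          apply Finset.sum_congr rfl
          intro i _
          rw [Finset.sum_const, nsmul_eq_mul]
          ring
      _ ≤ (1 + δ) * ((P : ℝ) * ∑ i : Fin m, τ i) := by
          apply mul_le_mul_of_nonneg_left habel (by linarith)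
      _ ≤ (1 + δ) * ((P : ℝ) * f G) := by
          apply mul_le_mul_of_nonneg_left _ (by linarith)
          exact mul_le_mul_of_nonneg_left hτsum (Nat.cast_nonneg P)
      _ = (1 + δ) * P * f G := by ring
  refine ⟨part1, ?_⟩
  -- Part 2
  have hOsub : O ⊆ G ∪ (O \ G) := by
    intro x hx
    by_cases hxG : x ∈ G
    · exact Finset.mem_union_left _ hxG
    · exact Finset.mem_union_right _ (Finset.mem_sdiff.mpr ⟨hx, hxG⟩)
  have hGU : G ∪ (O \ G) ⊆ Z := Finset.union_subset hG ((Finset.sdiff_subset).trans hO)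
  have h1 : f O ≤ f (G ∪ (O \ G)) := hmono O (G ∪ (O \ G)) hOsub hGU
  have h2 : f (G ∪ (O \ G)) ≤ f G + ∑ j ∈ O \ G, (f (insert j G) - f G) :=
    submod_union_bound Z f hsub G hG (O \ G) ((Finset.sdiff_subset).trans hO)
      (Finset.sdiff_disjoint)
  linarith
end

section
/- In the intersection F of P matroids on finite ground set Z, if G is a maximal element of F contained in G ∪ O and O ∈ F, then |O \ G| ≤ P·|G|. -/
open Finset

theorem stmt_17 {α : Type*} [DecidableEq α] (Z : Finset α) (P : ℕ)
    (I : Fin P → (Finset α → Prop)) (hM : ∀ p, IsMatroid Z (I p))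
    (F : Finset α → Prop) (hF : ∀ S, F S ↔ ∀ p, I p S)
    (G O : Finset α) (hG : F G) (hO : F O)
    -- `G` is maximal in `F` within `Q = G ∪ O`
    (hmax : ∀ z ∈ (G ∪ O) \ G, ¬ F (insert z G)) :
    (O \ G).card ≤ P * G.card := by
  classical
  set S : Fin P → Finset α := fun p => (O \ G).filter (fun z => ¬ I p (insert z G)) with hS
  have hsub : O \ G ⊆ Finset.univ.biUnion S := by
    intro z hz
    have hzQ : z ∈ (G ∪ O) \ G := by
      simp only [mem_sdiff, mem_union] at hz ⊢
      exact ⟨Or.inr hz.1, hz.2⟩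
    have := hmax z hzQ
    rw [hF] at this
    push_neg at this
    obtain ⟨p, hp⟩ := this
    exact Finset.mem_biUnion.2 ⟨p, Finset.mem_univ p, Finset.mem_filter.2 ⟨hz, hp⟩⟩
  have hSp : ∀ p, (S p).card ≤ G.card := by
    intro p
    by_contra h
    push_neg at h
    have hGp : I p G := (hF G).1 hG p
    have hSpI : I p (S p) := by
      refine (hM p).heredity ((hF O).1 hO p) ?_
      intro x hx
      exact (Finset.mem_sdiff.1 (Finset.mem_filter.1 hx).1).1
    obtain ⟨z, hz, hins⟩ := (hM p).exchange hGp hSpI h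
    exact (Finset.mem_filter.1 (Finset.mem_sdiff.1 hz).1).2 hins
  calc (O \ G).card ≤ (Finset.univ.biUnion S).card := Finset.card_le_card hsub
    _ ≤ ∑ p, (S p).card := Finset.card_biUnion_le
    _ ≤ ∑ _p : Fin P, G.card := Finset.sum_le_sum fun p _ => hSp p
    _ = P * G.card := by simp [Finset.sum_const, Finset.card_univ]
end

section
/- Let f be normalized monotone submodular on Z, G = {g₁,...,g_m} with prefixes G^t, and suppose nonnegative nonincreasing thresholds τ₁ ≥ ... ≥ τ_m satisfy f(g_t | G^{t−1}) ≥ τ_t for all t. Let C₁,...,C_m be disjoint subsets of Z \ G with ∑_{i=1}^t |C_i| ≤ P·t for all t and f(j | G) ≤ (1+δ)τ_t for all j ∈ C_t. Then ∑_{t=1}^m ∑_{j∈C_t} f(j|G) ≤ (1+δ)·P·f(G). -/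
open Finset

lemma lp_lemma (P : ℝ) : ∀ (m : ℕ) (a τ : ℕ → ℝ),
    (∀ i j, i ≤ j → j < m → τ j ≤ τ i) →
    (∀ i, i < m → 0 ≤ τ i) →
    (∀ t, t ≤ m → ∑ i ∈ Finset.range t, a i ≤ P * t) →
    ∑ i ∈ Finset.range m, a i * τ i ≤ P * ∑ i ∈ Finset.range m, τ i := by
  intro m
  induction m with
  | zero => simp
  | succ m ih =>
    intro a τ hmono hpos hS
    have h1 : ∑ i ∈ Finset.range m, a i * (τ i - τ m)
        ≤ P * ∑ i ∈ Finset.range m, (τ i - τ m) :=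
      ih a (fun i => τ i - τ m)
        (fun i j hij hj => by
          have := hmono i j hij (hj.trans (Nat.lt_succ_self m))
          show τ j - τ m ≤ τ i - τ m; linarith)
        (fun i hi => by
          have := hmono i m (le_of_lt hi) (Nat.lt_succ_self m)
          show (0:ℝ) ≤ τ i - τ m; linarith)
        (fun t ht => hS t (ht.trans (Nat.le_succ m)))
    have h2 : τ m * (∑ i ∈ Finset.range (m+1), a i) ≤ τ m * (P * (m+1)) :=
      mul_le_mul_of_nonneg_left (by exact_mod_cast hS (m+1) le_rfl)
        (hpos m (Nat.lt_succ_self m))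
    have e1 : ∑ i ∈ Finset.range m, a i * (τ i - τ m)
        = ∑ i ∈ Finset.range m, a i * τ i - ∑ i ∈ Finset.range m, a i * τ m := by
      rw [← Finset.sum_sub_distrib]
      exact Finset.sum_congr rfl fun i _ => mul_sub _ _ _
    have e2 : τ m * ∑ i ∈ Finset.range (m+1), a i
        = ∑ i ∈ Finset.range m, a i * τ m + a m * τ m := by
      rw [Finset.sum_range_succ, mul_add, Finset.mul_sum]
      simp [mul_comm]
    have e3 : ∑ i ∈ Finset.range m, (τ i - τ m)
        = (∑ i ∈ Finset.range m, τ i) - m * τ m := by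
      rw [Finset.sum_sub_distrib, Finset.sum_const, Finset.card_range, nsmul_eq_mul]
    have key : ∑ i ∈ Finset.range (m+1), a i * τ i
        = ∑ i ∈ Finset.range m, a i * (τ i - τ m)
          + τ m * ∑ i ∈ Finset.range (m+1), a i := by
      rw [e1, e2, Finset.sum_range_succ]; ring
    calc ∑ i ∈ Finset.range (m+1), a i * τ i
        = ∑ i ∈ Finset.range m, a i * (τ i - τ m)
          + τ m * ∑ i ∈ Finset.range (m+1), a i := key
      _ ≤ P * ((∑ i ∈ Finset.range m, τ i) - m * τ m) + τ m * (P * (m+1)) := by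
          rw [e3] at h1; linarith
      _ = P * ((∑ i ∈ Finset.range m, τ i) + τ m) := by push_cast; ring
      _ = P * ∑ i ∈ Finset.range (m+1), τ i := by rw [Finset.sum_range_succ]

lemma greedyPrefix_succ_aux {α : Type*} [DecidableEq α] {m : ℕ} (g : Fin m → α) (i : Fin m) :
    greedyPrefix g ((i : ℕ) + 1) = insert (g i) (greedyPrefix g i) := by
  ext x
  simp only [greedyPrefix, Finset.mem_image, Finset.mem_insert, Finset.mem_filter,
    Finset.mem_univ, true_and]
  constructor
  · rintro ⟨j, hj, rfl⟩
    rcases Nat.lt_succ_iff_lt_or_eq.mp hj with h | h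
    · exact Or.inr ⟨j, h, rfl⟩
    · left; congr 1; exact Fin.ext h
  · rintro (rfl | ⟨j, hj, rfl⟩)
    · exact ⟨i, Nat.lt_succ_self _, rfl⟩
    · exact ⟨j, Nat.lt_succ_of_lt hj, rfl⟩

theorem stmt_18 {α : Type*} [DecidableEq α] (Z : Finset α) (f : Finset α → ℝ)
    (hnorm : f ∅ = 0) (hmono : IsMonotoneOn Z f) (hsub : IsSubmodularOn Z f)
    (P : ℕ) (hP : 0 < P) (δ : ℝ) (hδ : 0 ≤ δ)
    (m : ℕ) (g : Fin m → α) (hginj : Function.Injective g)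
    (G : Finset α) (hGdef : G = greedyPrefix g m) (hG : G ⊆ Z)
    (τ : Fin m → ℝ) (hτ0 : ∀ i, 0 ≤ τ i)
    (hτmono : ∀ i j : Fin m, i ≤ j → τ j ≤ τ i)
    -- `f(g_t | G^{t-1}) ≥ τ_t` (with `t = i+1`)
    (hgain : ∀ i : Fin m,
      f (insert (g i) (greedyPrefix g i)) - f (greedyPrefix g i) ≥ τ i)
    (C : Fin m → Finset α)
    (hCdisj : ∀ i j : Fin m, i ≠ j → Disjoint (C i) (C j))
    (hCsub : ∀ i, C i ⊆ Z \ G)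
    -- prefix-size bound `∑_{i=1}^t |C_i| ≤ P·t`
    (hCsize : ∀ t : ℕ, t ≤ m →
      ∑ i ∈ Finset.univ.filter (fun i : Fin m => (i : ℕ) < t), (C i).card ≤ P * t)
    -- `f(j | G) ≤ (1+δ)τ_t` for all `j ∈ C_t`
    (hCgain : ∀ i : Fin m, ∀ j ∈ C i,
      f (insert j G) - f G ≤ (1 + δ) * τ i) :
    ∑ i : Fin m, ∑ j ∈ C i, (f (insert j G) - f G) ≤ (1 + δ) * P * f G := by
  classical
  -- extend card of C and τ to ℕ-indexed functions
  set a : ℕ → ℝ := fun n => if h : n < m then ((C ⟨n, h⟩).card : ℝ) else 0 with ha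
  set τN : ℕ → ℝ := fun n => if h : n < m then τ ⟨n, h⟩ else 0 with hτN
  -- Step 1: f G ≥ ∑ τ
  have h0 : greedyPrefix g 0 = ∅ := by simp [greedyPrefix]
  have htel := Finset.sum_range_sub (fun t => f (greedyPrefix g t)) m
  have hfG : ∑ i : Fin m, τ i ≤ f G := by
    have hconv : ∑ i : Fin m, τ i = ∑ n ∈ Finset.range m, τN n := by
      rw [← Fin.sum_univ_eq_sum_range τN m]
      exact Finset.sum_congr rfl fun i _ => by simp [hτN, i.isLt]
    rw [hconv, hGdef]
    calc ∑ n ∈ Finset.range m, τN n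
        ≤ ∑ n ∈ Finset.range m,
            (f (greedyPrefix g (n+1)) - f (greedyPrefix g n)) := by
          apply Finset.sum_le_sum
          intro n hn
          have hn' : n < m := Finset.mem_range.mp hn
          have := hgain ⟨n, hn'⟩
          rw [← greedyPrefix_succ_aux g ⟨n, hn'⟩] at this
          simpa [hτN, hn'] using this
      _ = f (greedyPrefix g m) - f (greedyPrefix g 0) := htel
      _ = f (greedyPrefix g m) := by rw [h0, hnorm]; ring
  -- Step 2: prefix-sum bound for a
  have hS : ∀ t, t ≤ m → ∑ i ∈ Finset.range t, a i ≤ (P : ℝ) * t := by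
    intro t ht
    have hconv : ∑ i ∈ Finset.range t, a i
        = ((∑ i ∈ Finset.univ.filter (fun i : Fin m => (i : ℕ) < t), (C i).card : ℕ) : ℝ) := by
      push_cast
      rw [Finset.sum_filter]
      have : ∀ i : Fin m, (if (i : ℕ) < t then ((C i).card : ℝ) else 0)
          = (fun n => if n < t then a n else 0) (i : ℕ) := by
        intro i; simp [ha, i.isLt]
      rw [Finset.sum_congr rfl fun i _ => this i,
        Fin.sum_univ_eq_sum_range (fun n => if n < t then a n else 0) m,
        ← Finset.sum_filter]
      congr 1
      ext n; simp only [Finset.mem_filter, Finset.mem_range]; omega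
    rw [hconv]
    exact_mod_cast hCsize t ht
  -- Step 3: LP duality
  have hLP : ∑ i : Fin m, ((C i).card : ℝ) * τ i ≤ (P : ℝ) * ∑ i : Fin m, τ i := by
    have hconv1 : ∑ i : Fin m, ((C i).card : ℝ) * τ i
        = ∑ n ∈ Finset.range m, a n * τN n := by
      rw [← Fin.sum_univ_eq_sum_range (fun n => a n * τN n) m]
      exact Finset.sum_congr rfl fun i _ => by simp [ha, hτN, i.isLt]
    have hconv2 : ∑ i : Fin m, τ i = ∑ n ∈ Finset.range m, τN n := by
      rw [← Fin.sum_univ_eq_sum_range τN m]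
      exact Finset.sum_congr rfl fun i _ => by simp [hτN, i.isLt]
    rw [hconv1, hconv2]
    apply lp_lemma (P : ℝ) m a τN
    · intro i j hij hj
      have hi : i < m := lt_of_le_of_lt hij hj
      simpa [hτN, hi, hj] using hτmono ⟨i, hi⟩ ⟨j, hj⟩ hij
    · intro i hi; simpa [hτN, hi] using hτ0 ⟨i, hi⟩
    · exact hS
  -- Step 4: assemble
  have hstep : ∑ i : Fin m, ∑ j ∈ C i, (f (insert j G) - f G)
      ≤ (1 + δ) * ∑ i : Fin m, ((C i).card : ℝ) * τ i := by
    rw [Finset.mul_sum]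
    apply Finset.sum_le_sum
    intro i _
    have := Finset.sum_le_card_nsmul (C i) (fun j => f (insert j G) - f G)
      ((1 + δ) * τ i) (fun j hj => hCgain i j hj)
    rw [nsmul_eq_mul] at this
    calc ∑ j ∈ C i, (f (insert j G) - f G) ≤ ((C i).card : ℝ) * ((1 + δ) * τ i) := this
      _ = (1 + δ) * (((C i).card : ℝ) * τ i) := by ring
  have h1δ : (0:ℝ) ≤ 1 + δ := by linarith
  have hPpos : (0:ℝ) ≤ (P : ℝ) := Nat.cast_nonneg P
  calc ∑ i : Fin m, ∑ j ∈ C i, (f (insert j G) - f G)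
      ≤ (1 + δ) * ∑ i : Fin m, ((C i).card : ℝ) * τ i := hstep
    _ ≤ (1 + δ) * ((P : ℝ) * ∑ i : Fin m, τ i) := mul_le_mul_of_nonneg_left hLP h1δ
    _ ≤ (1 + δ) * ((P : ℝ) * f G) :=
        mul_le_mul_of_nonneg_left (mul_le_mul_of_nonneg_left hfG hPpos) h1δ
    _ = (1 + δ) * P * f G := by ring
end
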